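/- Let X ⊂ L⁰(ℝⁿ) be a quasi-Banach space of measurable functions satisfying the ideal property (if |g| ≤ |f| a.e. and f ∈ X then g ∈ X with ‖g‖_X ≤ ‖f‖_X). If the Hardy–Littlewood maximal operator M is weakly bounded on X, i.e., there is C > 0 such that λ‖χ_{{Mf > λ}}‖_X ≤ C‖f‖_X for all λ > 0 and f ∈ X, then there exists C' > 0 such that for every cube Q with sides parallel to the axes, ‖χ_Q‖_X · ‖χ_Q‖_{X'} ≤ C'|Q|, where ‖g‖_{X'} = sup_{‖h‖_X ≤ 1} ∫|gh|. -/

import Mathlib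

open MeasureTheory ENNReal NNReal Set

noncomputable section

/-- Euclidean space `ℝⁿ`. -/
abbrev En (n : ℕ) : Type := EuclideanSpace ℝ (Fin n)

/-- The axis-parallel half-open cube `Q(x,r) = x + [-r, r)ⁿ`. -/
def Cube {n : ℕ} (x : En n) (r : ℝ) : Set (En n) :=
  {y | ∀ i, x i - r ≤ y i ∧ y i < x i + r}

/-- The uncentered Hardy–Littlewood maximal operator over axis-parallel cubes. -/
def maximal {n : ℕ} (f : En n → ℝ≥0∞) (x : En n) : ℝ≥0∞ :=
  ⨆ (c : En n) (r : ℝ) (_ : 0 < r) (_ : x ∈ Cube c r),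
    (∫⁻ y in Cube c r, f y) / volume (Cube c r)

/-- The associate (Köthe dual) functional `‖g‖_{X'} = sup_{‖h‖_X ≤ 1} ∫ |g h|`. -/
def associate {n : ℕ} (N : (En n → ℝ≥0∞) → ℝ≥0∞) (g : En n → ℝ≥0∞) : ℝ≥0∞ :=
  ⨆ (h : En n → ℝ≥0∞) (_ : N h ≤ 1), ∫⁻ x, g x * h x

/-- A quasi-Banach function quasi-norm with the ideal (lattice) property. -/
structure IsQuasiBanachFN {n : ℕ} (N : (En n → ℝ≥0∞) → ℝ≥0∞) : Prop where
  smul : ∀ (c : ℝ≥0) (f : En n → ℝ≥0∞), N (fun x => (c : ℝ≥0∞) * f x) = (c : ℝ≥0∞) * N f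
  quasi_triangle : ∃ K : ℝ≥0∞, 1 ≤ K ∧ K ≠ ∞ ∧
    ∀ f g : En n → ℝ≥0∞, N (f + g) ≤ K * (N f + N g)
  ideal : ∀ f g : En n → ℝ≥0∞, (∀ᵐ x ∂volume, g x ≤ f x) → N g ≤ N f

/-- A quasi-rBfs: a quasi-Banach function quasi-norm with the ideal property such that
indicators of cubes have finite quasi-norm. -/
structure IsQuasiRBFS {n : ℕ} (N : (En n → ℝ≥0∞) → ℝ≥0∞) extends IsQuasiBanachFN N : Prop where
  cube_lt_top : ∀ (c : En n) (r : ℝ), 0 < r → N ((Cube c r).indicator 1) < ∞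

/-- A Banach function norm: ideal property, homogeneity and the triangle inequality. -/
structure IsBanachFN {n : ℕ} (N : (En n → ℝ≥0∞) → ℝ≥0∞) : Prop where
  smul : ∀ (c : ℝ≥0) (f : En n → ℝ≥0∞), N (fun x => (c : ℝ≥0∞) * f x) = (c : ℝ≥0∞) * N f
  add_le : ∀ f g : En n → ℝ≥0∞, N (f + g) ≤ N f + N g
  ideal : ∀ f g : En n → ℝ≥0∞, (∀ᵐ x ∂volume, g x ≤ f x) → N g ≤ N f

/-- `φ` is almost decreasing in its second variable. -/
def AlmostDecr {n : ℕ} (φ : En n → ℝ → ℝ) : Prop :=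
  ∃ C > (0 : ℝ), ∀ (x : En n) (r s : ℝ), 0 < s → s ≤ r → φ x r ≤ C * φ x s

/-- `φ(x,r) ≍ φ(y,r)` whenever `|x - y| ≤ r`. -/
def NearComparable {n : ℕ} (φ : En n → ℝ → ℝ) : Prop :=
  ∃ C ≥ (1 : ℝ), ∀ (x y : En n) (r : ℝ), 0 < r → ‖x - y‖ ≤ r →
    C⁻¹ * φ y r ≤ φ x r ∧ φ x r ≤ C * φ y r

/-- `φ` is positive. -/
def PhiPos {n : ℕ} (φ : En n → ℝ → ℝ) : Prop :=
  ∀ (x : En n) (r : ℝ), 0 < r → 0 < φ x r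

/-- The average `f_Q` of `f` over the cube `Q(c,r)`. -/
def cubeAvg {n : ℕ} (c : En n) (r : ℝ) (f : En n → ℝ) : ℝ :=
  ⨍ z in Cube c r, f z

/-- The pointwise oscillation `|f - f_Q|` (as an `ℝ≥0∞`-valued function). -/
def osc {n : ℕ} (c : En n) (r : ℝ) (f : En n → ℝ) : En n → ℝ≥0∞ :=
  fun y => (‖f y - cubeAvg c r f‖₊ : ℝ≥0∞)

/-- The Campanato norm `‖f‖_{L_{1,φ}} = sup_Q φ(Q) |Q|⁻¹ ∫_Q |f - f_Q|`. -/
def campanato {n : ℕ} (φ : En n → ℝ → ℝ) (f : En n → ℝ) : ℝ≥0∞ :=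
  ⨆ (c : En n) (r : ℝ) (_ : 0 < r),
    ENNReal.ofReal (φ c r) * ((∫⁻ y in Cube c r, osc c r f y) / volume (Cube c r))

/-- The quantity `sup_Q φ(Q) ‖(f - f_Q)χ_Q‖_X / ‖χ_Q‖_X`. -/
def ratioNorm {n : ℕ} (N : (En n → ℝ≥0∞) → ℝ≥0∞) (φ : En n → ℝ → ℝ) (f : En n → ℝ) : ℝ≥0∞ :=
  ⨆ (c : En n) (r : ℝ) (_ : 0 < r),
    ENNReal.ofReal (φ c r) *
      (N ((Cube c r).indicator (osc c r f)) / N ((Cube c r).indicator 1))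

/-- The vector-valued maximal bound `‖Σ (M f_j)^η‖_X ≤ C ‖Σ |f_j|^η‖_X`. -/
def VectorMaximal {n : ℕ} (N : (En n → ℝ≥0∞) → ℝ≥0∞) (η : ℝ) (C : ℝ≥0∞) : Prop :=
  ∀ f : ℕ → En n → ℝ≥0∞, (∀ j, Measurable (f j)) →
    N (fun x => ∑' j, maximal (f j) x ^ η) ≤ C * N (fun x => ∑' j, f j x ^ η)


lemma measurable_coord {n : ℕ} (i : Fin n) : Measurable fun y : En n => y i :=
  (EuclideanSpace.proj (𝕜 := ℝ) i).continuous.measurable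

lemma continuous_coord {n : ℕ} (i : Fin n) : Continuous fun y : En n => y i :=
  (EuclideanSpace.proj (𝕜 := ℝ) i).continuous

lemma measurableSet_cube {n : ℕ} (c : En n) (r : ℝ) : MeasurableSet (Cube c r) := by
  have : Cube c r = ⋂ i, {y : En n | c i - r ≤ y i ∧ y i < c i + r} := by
    ext y; simp [Cube, Set.mem_iInter]
  rw [this]
  exact MeasurableSet.iInter fun i =>
    (measurableSet_le measurable_const (measurable_coord i)).inter
      (measurableSet_lt (measurable_coord i) measurable_const)

lemma cube_volume_pos {n : ℕ} (c : En n) {r : ℝ} (hr : 0 < r) : 0 < volume (Cube c r) := by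
  have hO : IsOpen (⋂ i, {y : En n | c i - r < y i ∧ y i < c i + r}) :=
    isOpen_iInter_of_finite fun i =>
      ((isOpen_lt continuous_const (continuous_coord i)).inter
        (isOpen_lt (continuous_coord i) continuous_const))
  have hsub : (⋂ i, {y : En n | c i - r < y i ∧ y i < c i + r}) ⊆ Cube c r := by
    intro y hy i
    simp only [Set.mem_iInter, Set.mem_setOf_eq] at hy
    exact ⟨(hy i).1.le, (hy i).2⟩
  have hne : (⋂ i, {y : En n | c i - r < y i ∧ y i < c i + r}).Nonempty :=
    ⟨c, by simp only [Set.mem_iInter, Set.mem_setOf_eq]; intro i; constructor <;> linarith⟩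
  exact lt_of_lt_of_le (hO.measure_pos volume hne) (measure_mono hsub)

lemma cube_volume_lt_top {n : ℕ} (c : En n) {r : ℝ} (hr : 0 < r) : volume (Cube c r) < ∞ := by
  have hsub : Cube c r ⊆ Metric.closedBall c (Real.sqrt n * r) := by
    intro y hy
    rw [Metric.mem_closedBall, dist_eq_norm, EuclideanSpace.norm_eq]
    have h1 : ∀ i, ‖(y - c) i‖ ^ 2 ≤ r ^ 2 := by
      intro i
      have h := hy i
      have habs : |y i - c i| ≤ r := abs_le.2 ⟨by linarith [h.1], by linarith [h.2]⟩
      have : ‖(y - c) i‖ = |y i - c i| := by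
        simp [Real.norm_eq_abs]
      rw [this]
      nlinarith [abs_nonneg (y i - c i)]
    calc Real.sqrt (∑ i, ‖(y - c) i‖ ^ 2) ≤ Real.sqrt (∑ _i : Fin n, r ^ 2) :=
          Real.sqrt_le_sqrt (Finset.sum_le_sum fun i _ => h1 i)
      _ = Real.sqrt n * r := by
          rw [Finset.sum_const, Finset.card_univ, Fintype.card_fin, nsmul_eq_mul,
            Real.sqrt_mul (Nat.cast_nonneg n), Real.sqrt_sq hr.le]
  exact lt_of_le_of_lt (measure_mono hsub) measure_closedBall_lt_top

lemma biSup_lt_self (t : ℝ≥0∞) : (⨆ (l : ℝ≥0∞) (_ : l < t), l) = t := by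
  apply le_antisymm (iSup₂_le fun l hl => hl.le)
  rcases eq_or_ne t 0 with rfl | ht
  · simp
  refine le_of_forall_lt fun a ha => ?_
  obtain ⟨d, had, hdt⟩ := exists_between ha
  exact lt_of_lt_of_le had (le_iSup₂ (f := fun l (_ : l < t) => l) d hdt)

/-- if the Hardy–Littlewood maximal operator is weakly bounded on a
quasi-Banach function space `X` with the ideal property, then
`‖χ_Q‖_X ‖χ_Q‖_{X'} ≤ C' |Q|` for all cubes `Q`. -/
theorem statement0 {n : ℕ} (N : (En n → ℝ≥0∞) → ℝ≥0∞) (hN : IsQuasiBanachFN N)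
    (hweak : ∃ C : ℝ≥0∞, 0 < C ∧ C ≠ ∞ ∧
      ∀ (lam : ℝ≥0∞) (f : En n → ℝ≥0∞), 0 < lam →
        lam * N ({x | lam < maximal f x}.indicator 1) ≤ C * N f) :
    ∃ C : ℝ≥0∞, 0 < C ∧ C ≠ ∞ ∧ ∀ (c : En n) (r : ℝ), 0 < r →
      N ((Cube c r).indicator 1) * associate N ((Cube c r).indicator 1)
        ≤ C * volume (Cube c r) := by
  obtain ⟨C, hC0, hCtop, hC⟩ := hweak
  refine ⟨C, hC0, hCtop, fun c r hr => ?_⟩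
  have hQm : MeasurableSet (Cube c r) := measurableSet_cube c r
  have hV0 : volume (Cube c r) ≠ 0 := (cube_volume_pos c hr).ne'
  have hVtop : volume (Cube c r) ≠ ∞ := (cube_volume_lt_top c hr).ne
  rw [associate, ENNReal.mul_iSup]
  refine iSup_le fun h => ?_
  rw [ENNReal.mul_iSup]
  refine iSup_le fun hh => ?_
  have hint : (∫⁻ x, (Cube c r).indicator 1 x * h x) = ∫⁻ y in Cube c r, h y := by
    rw [← lintegral_indicator hQm]
    congr 1; funext x
    by_cases hx : x ∈ Cube c r <;> simp [Set.indicator_apply, hx]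
  rw [hint]
  set B := N ((Cube c r).indicator 1) with hB
  set I := ∫⁻ y in Cube c r, h y with hI
  set t := I / volume (Cube c r) with ht
  have key : ∀ l : ℝ≥0∞, l < t → l * B ≤ C := by
    intro l hl
    rcases eq_or_ne l 0 with rfl | hl0
    · simp
    have hsub : Cube c r ⊆ {x | l < maximal h x} := by
      intro x hx
      have hle : t ≤ maximal h x := by
        rw [maximal]
        exact le_iSup_of_le c (le_iSup_of_le r (le_iSup_of_le hr (le_iSup_of_le hx le_rfl)))
      exact lt_of_lt_of_le hl hle
    have hmono : B ≤ N ({x | l < maximal h x}.indicator 1) :=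
      hN.ideal _ _ (Filter.Eventually.of_forall fun x =>
        Set.indicator_le_indicator_of_subset hsub (fun _ => zero_le) x)
    calc l * B ≤ l * N ({x | l < maximal h x}.indicator 1) := mul_le_mul_right hmono l
      _ ≤ C * N h := hC l h (pos_iff_ne_zero.mpr hl0)
      _ ≤ C * 1 := mul_le_mul_right hh C
      _ = C := mul_one C
  have htB : t * B ≤ C := by
    have heq : t * B = ⨆ (l : ℝ≥0∞) (_ : l < t), l * B := by
      conv_lhs => rw [← biSup_lt_self t]
      rw [ENNReal.iSup_mul]
      exact iSup_congr fun l => ENNReal.iSup_mul _ _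
    rw [heq]
    exact iSup₂_le key
  have hIt : t * volume (Cube c r) = I := ENNReal.div_mul_cancel hV0 hVtop
  calc B * I = t * B * volume (Cube c r) := by rw [mul_comm t B, mul_assoc, hIt]
    _ ≤ C * volume (Cube c r) := mul_le_mul_left htB _
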